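/- Let F : A ⥤ C and G : B ⥤ C be functors of categories. Let L(F,G) be the category whose objects are tuples (a, b, c, α : F a ⟶ c, β : G b ⟶ c) and whose morphisms (a,b,c,α,β) ⟶ (a',b',c',α',β') are triples (f : a ⟶ a', g : b ⟶ b', h : c ⟶ c') satisfying h ∘ α = α' ∘ F f and h ∘ β = β' ∘ G g. Then the full subcategory of L(F,G) spanned by objects for which β is an isomorphism is equivalent to the comma category Comma F G (whose objects are (a, b, α : F a ⟶ G b)). -/

import Mathlib

open CategoryTheory

universe v₁ v₂ v₃ u₁ u₂ u₃

variable {A : Type u₁} {B : Type u₂} {C : Type u₃}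
  [Category.{v₁} A] [Category.{v₂} B] [Category.{v₃} C]

/-- An object of the lax pullback `L(F,G)`: a tuple `(a, b, c, α : F a ⟶ c, β : G b ⟶ c)`. -/
structure LaxPullback (F : A ⥤ C) (G : B ⥤ C) where
  a : A
  b : B
  c : C
  α : F.obj a ⟶ c
  β : G.obj b ⟶ c

/-- A morphism in the lax pullback: a triple `(f, g, h)` making both squares commute. -/
@[ext]
structure LaxPullbackHom {F : A ⥤ C} {G : B ⥤ C} (o o' : LaxPullback F G) where
  f : o.a ⟶ o'.a
  g : o.b ⟶ o'.b
  h : o.c ⟶ o'.c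
  wα : o.α ≫ h = F.map f ≫ o'.α
  wβ : o.β ≫ h = G.map g ≫ o'.β

attribute [simp] LaxPullbackHom.wα LaxPullbackHom.wβ

instance {F : A ⥤ C} {G : B ⥤ C} : Category (LaxPullback F G) where
  Hom := LaxPullbackHom
  id o := { f := 𝟙 o.a, g := 𝟙 o.b, h := 𝟙 o.c, wα := by simp, wβ := by simp }
  comp φ ψ :=
    { f := φ.f ≫ ψ.f, g := φ.g ≫ ψ.g, h := φ.h ≫ ψ.h
      wα := by rw [← Category.assoc, φ.wα, Category.assoc, ψ.wα, Functor.map_comp,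
        Category.assoc]
      wβ := by rw [← Category.assoc, φ.wβ, Category.assoc, ψ.wβ, Functor.map_comp,
        Category.assoc] }
  id_comp φ := by apply LaxPullbackHom.ext <;> simp
  comp_id φ := by apply LaxPullbackHom.ext <;> simp
  assoc φ ψ χ := by apply LaxPullbackHom.ext <;> simp

lemma LaxPullbackHom.h_inv {F : A ⥤ C} {G : B ⥤ C} {o o' : LaxPullback F G}
    (φ : LaxPullbackHom o o') [IsIso o.β] [IsIso o'.β] :
    φ.h ≫ inv o'.β = inv o.β ≫ G.map φ.g := by
  rw [IsIso.eq_inv_comp, ← Category.assoc, φ.wβ, Category.assoc,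
    IsIso.hom_inv_id, Category.comp_id]

/-- The full subcategory of the lax pullback `L(F,G)` spanned by the objects whose structure
map `β : G b ⟶ c` is an isomorphism is equivalent to the comma category `Comma F G`. -/
theorem laxPullback_beta_iso_equiv_comma (F : A ⥤ C) (G : B ⥤ C) :
    Nonempty ((ObjectProperty.FullSubcategory fun o : LaxPullback F G => IsIso o.β) ≌ Comma F G) := by
  refine ⟨?_⟩
  exact
  { functor :=
    { obj := fun o =>
        { left := o.obj.a
          right := o.obj.b
          hom := have := o.property; o.obj.α ≫ inv o.obj.β }
      map := fun {o o'} φ =>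
        { left := φ.hom.f
          right := φ.hom.g
          w := by
            haveI := o.property; haveI := o'.property
            dsimp
            rw [← Category.assoc, ← φ.hom.wα, Category.assoc,
              LaxPullbackHom.h_inv (G := G) φ.hom, Category.assoc] }
      map_id := fun o => by apply CommaMorphism.ext <;> rfl
      map_comp := fun φ ψ => by apply CommaMorphism.ext <;> rfl }
    inverse :=
    { obj := fun x =>
        ⟨{ a := x.left, b := x.right, c := G.obj x.right, α := x.hom, β := 𝟙 _ }, by
          dsimp; infer_instance⟩
      map := fun {x y} φ =>
        { hom := { f := φ.left
                   g := φ.right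
                   h := G.map φ.right
                   wα := φ.w.symm
                   wβ := by simp } }
      map_id := fun x => by
        apply ObjectProperty.hom_ext
        apply LaxPullbackHom.ext
        · rfl
        · rfl
        · show G.map (𝟙 x.right) = 𝟙 _; simp
      map_comp := fun φ ψ => by
        apply ObjectProperty.hom_ext
        apply LaxPullbackHom.ext
        · rfl
        · rfl
        · show G.map (_ ≫ _) = G.map _ ≫ G.map _; simp }
    unitIso := NatIso.ofComponents
      (fun o => by
        haveI := o.property
        exact
        { hom := { hom := { f := 𝟙 _, g := 𝟙 _, h := inv o.obj.β, wα := by simp, wβ := by simp } }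
          inv := { hom := { f := 𝟙 _, g := 𝟙 _, h := o.obj.β, wα := by simp, wβ := by simp } }
          hom_inv_id := by
            apply ObjectProperty.hom_ext
            apply LaxPullbackHom.ext
            · show 𝟙 _ ≫ 𝟙 _ = 𝟙 _; simp
            · show 𝟙 _ ≫ 𝟙 _ = 𝟙 _; simp
            · show inv o.obj.β ≫ o.obj.β = 𝟙 _; simp
          inv_hom_id := by
            apply ObjectProperty.hom_ext
            apply LaxPullbackHom.ext
            · show 𝟙 _ ≫ 𝟙 _ = 𝟙 _; simp
            · show 𝟙 _ ≫ 𝟙 _ = 𝟙 _; simp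
            · show o.obj.β ≫ inv o.obj.β = 𝟙 _; simp })
      (fun {o o'} φ => by
        haveI := o.property; haveI := o'.property
        apply ObjectProperty.hom_ext
        apply LaxPullbackHom.ext
        · show φ.hom.f ≫ 𝟙 _ = 𝟙 _ ≫ φ.hom.f; simp
        · show φ.hom.g ≫ 𝟙 _ = 𝟙 _ ≫ φ.hom.g; simp
        · show φ.hom.h ≫ inv o'.obj.β = inv o.obj.β ≫ G.map φ.hom.g
          exact LaxPullbackHom.h_inv (G := G) φ.hom)
    counitIso := NatIso.ofComponents
      (fun x => Comma.isoMk (Iso.refl _) (Iso.refl _) (by simp))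
      (fun {x y} φ => by
        apply CommaMorphism.ext
        · show φ.left ≫ 𝟙 _ = 𝟙 _ ≫ φ.left; simp
        · show φ.right ≫ 𝟙 _ = 𝟙 _ ≫ φ.right; simp)
    functor_unitIso_comp := fun o => by
      apply CommaMorphism.ext
      · show 𝟙 _ ≫ 𝟙 _ = 𝟙 _; simp
      · show 𝟙 _ ≫ 𝟙 _ = 𝟙 _; simp }
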